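/- Let S be a nonempty finite set, A = (A_{ss'}) a real S×S matrix, and b_s ≠ 0 reals with Σ_{s'} A_{ss'} b_{s'} = 2 for all s ∈ S. Let C > 0, β < 0, u_0 ∈ ℝ, and define f̄(u) = sqrt(−β/C) · sinh(√C (u − u_0)) and q^s(u) = −b_s ln f̄(u) for u > u_0. Then for all u > u_0 and all s ∈ S: (d²/du²) q^s(u) = −β b_s exp( Σ_{s'} A_{ss'} q^{s'}(u) ). Moreover, for any reals h_s (s ∈ S), the energy E_T(u) = (1/4) Σ_{s,s'} h_s A_{ss'} (q^s)'(u) (q^{s'})'(u) + (1/2) Σ_s h_s β b_s exp( Σ_{s'} A_{ss'} q^{s'}(u) ) is constant and equal to (1/2) C Σ_s h_s b_s for all u > u_0. -/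

import Mathlib

open scoped BigOperators

/-- The one-block sinh-type solution `q^s(u) = −b_s ln f̄(u)` with
`f̄(u) = √(−β/C) sinh(√C (u − u_0))` solves the Toda-like equations
`q̈^s = −β b_s exp(Σ_{s'} A_{ss'} q^{s'})` (where `Σ_{s'} A_{ss'} b_{s'} = 2`),
and the corresponding energy is constant, equal to `(1/2) C Σ_s h_s b_s`. -/
theorem stmt17 (S : Type) [Fintype S] [Nonempty S]
    (A : Matrix S S ℝ) (b : S → ℝ) (hbne : ∀ s, b s ≠ 0)
    (hb : ∀ s, ∑ s', A s s' * b s' = 2)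
    (C : ℝ) (hC : 0 < C) (β : ℝ) (hβ : β < 0) (u0 : ℝ)
    (fbar : ℝ → ℝ)
    (hfbar : ∀ u, fbar u = Real.sqrt (-β / C) * Real.sinh (Real.sqrt C * (u - u0)))
    (q : S → ℝ → ℝ)
    (hq : ∀ s u, q s u = -(b s) * Real.log (fbar u)) :
    (∀ u, u0 < u → ∀ s,
      deriv (deriv (q s)) u = -β * b s * Real.exp (∑ s', A s s' * q s' u)) ∧
    (∀ h : S → ℝ, ∀ u, u0 < u →
      (1 / 4) * (∑ s, ∑ s', h s * A s s' * deriv (q s) u * deriv (q s') u)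
        + (1 / 2) * (∑ s, h s * β * b s * Real.exp (∑ s', A s s' * q s' u))
      = (1 / 2) * C * ∑ s, h s * b s) := by
  have hk0 : 0 < Real.sqrt C := Real.sqrt_pos.mpr hC
  set k : ℝ := Real.sqrt C with hkdef
  have hk2 : k * k = C := Real.mul_self_sqrt hC.le
  have hab : (0:ℝ) < -β / C := div_pos (by linarith) hC
  set a : ℝ := Real.sqrt (-β / C) with hadef
  have ha0 : 0 < a := Real.sqrt_pos.mpr hab
  have ha2 : a * a = -β / C := Real.mul_self_sqrt hab.le
  have haβ : a * a * C = -β := by rw [ha2]; field_simp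
  have hqfun : ∀ s, q s = fun u => -(b s) * Real.log (a * Real.sinh (k * (u - u0))) := by
    intro s; funext u; rw [hq, hfbar]
  have hsi : ∀ u, u0 < u → 0 < Real.sinh (k * (u - u0)) :=
    fun u hu => Real.sinh_pos_iff.mpr (mul_pos hk0 (sub_pos.mpr hu))
  have hX : ∀ u : ℝ, HasDerivAt (fun v => k * (v - u0)) k u := by
    intro u
    simpa using ((hasDerivAt_id u).sub_const u0).const_mul k
  have hDq : ∀ s u, u0 < u →
      HasDerivAt (q s)
        (-(b s) * k * (Real.cosh (k*(u-u0)) / Real.sinh (k*(u-u0)))) u := by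
    intro s u hu
    have hsiu := hsi u hu
    have hsiD : HasDerivAt (fun v => Real.sinh (k*(v-u0))) (Real.cosh (k*(u-u0)) * k) u :=
      (Real.hasDerivAt_sinh _).comp u (hX u)
    have hfD : HasDerivAt (fun v => a * Real.sinh (k*(v-u0)))
        (a * (Real.cosh (k*(u-u0)) * k)) u := hsiD.const_mul a
    have hne : a * Real.sinh (k*(u-u0)) ≠ 0 := ne_of_gt (mul_pos ha0 hsiu)
    have h2 := (hfD.log hne).const_mul (-(b s))
    rw [hqfun s]
    refine h2.congr_deriv ?_
    rw [mul_div_mul_left _ _ (ne_of_gt ha0)]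
    ring
  have hderivq : ∀ s u, u0 < u → deriv (q s) u
      = -(b s) * k * (Real.cosh (k*(u-u0)) / Real.sinh (k*(u-u0))) :=
    fun s u hu => (hDq s u hu).deriv
  have hexp : ∀ (s : S) (u : ℝ), u0 < u →
      Real.exp (∑ s', A s s' * q s' u) = ((a * Real.sinh (k*(u-u0)))^2)⁻¹ := by
    intro s u hu
    have hpos : 0 < a * Real.sinh (k*(u-u0)) := mul_pos ha0 (hsi u hu)
    have hL : ∑ s', A s s' * q s' u
        = -(2 * Real.log (a * Real.sinh (k*(u-u0)))) := by
      have : ∀ s' : S, q s' u = -(b s') * Real.log (a * Real.sinh (k*(u-u0))) := by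
        intro s'; rw [hq, hfbar]
      calc ∑ s', A s s' * q s' u
          = (∑ s', A s s' * b s') * (-(Real.log (a * Real.sinh (k*(u-u0))))) := by
            rw [Finset.sum_mul]
            exact Finset.sum_congr rfl fun s' _ => by rw [this s']; ring
        _ = -(2 * Real.log (a * Real.sinh (k*(u-u0)))) := by rw [hb s]; ring
    rw [hL, Real.exp_neg, two_mul, Real.exp_add, Real.exp_log hpos]
    rw [sq]
  constructor
  · intro u hu s
    have hsiu := hsi u hu
    have hmem : {v : ℝ | u0 < v} ∈ nhds u :=
      (isOpen_lt continuous_const continuous_id).mem_nhds hu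
    have hev : deriv (q s) =ᶠ[nhds u]
        fun v => -(b s) * k * (Real.cosh (k*(v-u0)) / Real.sinh (k*(v-u0))) :=
      Filter.eventuallyEq_of_mem hmem (fun v hv => hderivq s v hv)
    rw [hev.deriv_eq]
    have hsiD : HasDerivAt (fun v => Real.sinh (k*(v-u0))) (Real.cosh (k*(u-u0)) * k) u :=
      (Real.hasDerivAt_sinh _).comp u (hX u)
    have hchD : HasDerivAt (fun v => Real.cosh (k*(v-u0))) (Real.sinh (k*(u-u0)) * k) u :=
      (Real.hasDerivAt_cosh _).comp u (hX u)
    have hdiv := (hchD.div hsiD (ne_of_gt hsiu)).const_mul (-(b s) * k)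
    have hdiv' : HasDerivAt (fun v => -(b s) * k * (Real.cosh (k*(v-u0)) / Real.sinh (k*(v-u0)))) _ u := hdiv
    rw [hdiv'.deriv, hexp s u hu]
    have hch2 : Real.cosh (k*(u-u0)) ^ 2 = Real.sinh (k*(u-u0)) ^ 2 + 1 := Real.cosh_sq _
    have hβ' : β ≠ 0 := ne_of_lt hβ
    have hsi0 : Real.sinh (k*(u-u0)) ≠ 0 := ne_of_gt hsiu
    have ha0' : a ≠ 0 := ne_of_gt ha0
    have hβ2 : β = -(a*a*C) := by linarith
    have key : -(b s) * k * ((Real.sinh (k*(u-u0)) * k * Real.sinh (k*(u-u0))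
          - Real.cosh (k*(u-u0)) * (Real.cosh (k*(u-u0)) * k)) / Real.sinh (k*(u-u0)) ^ 2)
        - -β * b s * ((a * Real.sinh (k*(u-u0)))^2)⁻¹
        = b s * k^2 * (Real.cosh (k*(u-u0))^2 - Real.sinh (k*(u-u0))^2 - 1)
          / Real.sinh (k*(u-u0))^2 := by
      rw [hβ2, ← hk2]
      field_simp
      ring
    linear_combination key + (b s * k^2 / Real.sinh (k*(u-u0))^2) * hch2
  · intro h u hu
    have hsiu := hsi u hu
    set si := Real.sinh (k*(u-u0)) with hsidef
    set ch := Real.cosh (k*(u-u0)) with hchdef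
    have hch2 : ch ^ 2 = si ^ 2 + 1 := Real.cosh_sq _
    have h1 : ∑ s, ∑ s', h s * A s s' * deriv (q s) u * deriv (q s') u
        = (2 * (k*(ch/si))^2) * ∑ s, h s * b s := by
      calc ∑ s, ∑ s', h s * A s s' * deriv (q s) u * deriv (q s') u
          = ∑ s, ∑ s', h s * A s s' * (-(b s)*k*(ch/si)) * (-(b s')*k*(ch/si)) :=
            Finset.sum_congr rfl fun s _ => Finset.sum_congr rfl fun s' _ => by
              rw [hderivq s u hu, hderivq s' u hu]
        _ = ∑ s, (h s * b s * (k*(ch/si))^2) * ∑ s', A s s' * b s' :=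
            Finset.sum_congr rfl fun s _ => by
              rw [Finset.mul_sum]
              exact Finset.sum_congr rfl fun s' _ => by ring
        _ = ∑ s, (h s * b s * (k*(ch/si))^2) * 2 :=
            Finset.sum_congr rfl fun s _ => by rw [hb s]
        _ = (2 * (k*(ch/si))^2) * ∑ s, h s * b s := by
            rw [Finset.mul_sum]
            exact Finset.sum_congr rfl fun s _ => by ring
    have h2 : ∑ s, h s * β * b s * Real.exp (∑ s', A s s' * q s' u)
        = (β * ((a*si)^2)⁻¹) * ∑ s, h s * b s := by
      rw [Finset.mul_sum]
      exact Finset.sum_congr rfl fun s _ => by rw [hexp s u hu]; ring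
    rw [h1, h2]
    have : (1 / 4) * (2 * (k*(ch/si))^2) + (1 / 2) * (β * ((a*si)^2)⁻¹) = (1/2) * C := by
      have hsi0 : si ≠ 0 := ne_of_gt hsiu
      have ha0' : a ≠ 0 := ne_of_gt ha0
      have hβ2 : β = -(a*a*C) := by linarith
      have key : (1 / 4) * (2 * (k*(ch/si))^2) + (1 / 2) * (β * ((a*si)^2)⁻¹) - (1/2) * C
          = (C/2) * (ch^2 - si^2 - 1) / si^2 := by
        rw [hβ2, ← hk2]
        field_simp
        ring
      linear_combination key + (C/2/si^2) * hch2
    calc (1 / 4) * ((2 * (k*(ch/si))^2) * ∑ s, h s * b s)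
          + (1 / 2) * ((β * ((a*si)^2)⁻¹) * ∑ s, h s * b s)
        = ((1 / 4) * (2 * (k*(ch/si))^2) + (1 / 2) * (β * ((a*si)^2)⁻¹)) * ∑ s, h s * b s := by ring
      _ = (1/2) * C * ∑ s, h s * b s := by rw [this]
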